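/- Let n be an even natural number, p = n/2, and let A be a finite set of (p−1)-faces of the n-dimensional Boolean cube with |A| ≤ n/32. Then the upper shadow of A satisfies |∂⁺A| ≥ |A| · (n/2 + 1) · (15/16). -/

import Mathlib

/-- A point of the cube complex: a word in `{0,1,*}^n`, where `*` is `none`. -/
abbrev Cube (n : ℕ) := Fin n → Option Bool

/-- `f` is a `p`-face of the `n`-cube: exactly `p` coordinates are `*` (i.e. `none`). -/
def IsFace (n p : ℕ) (f : Cube n) : Prop :=
  (Finset.univ.filter (fun i => f i = none)).card = p

/-- The upper shadow of a set of faces: all faces obtained from an element by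
replacing one non-`*` coordinate with `*`. -/
def upperShadow {n : ℕ} (A : Finset (Cube n)) : Finset (Cube n) :=
  A.biUnion (fun f =>
    (Finset.univ.filter (fun i => f i ≠ none)).image (fun i => Function.update f i none))

/-- The lower shadow of a set of faces: all faces obtained from an element by
replacing one `*` coordinate with either `0` or `1`. -/
def lowerShadow {n : ℕ} (A : Finset (Cube n)) : Finset (Cube n) :=
  A.biUnion (fun f =>
    ((Finset.univ ×ˢ (Finset.univ : Finset Bool)).filter (fun q : Fin n × Bool => f q.1 = none)).image
      (fun q : Fin n × Bool => Function.update f q.1 (some q.2)))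

open Finset

def nbr {n : ℕ} (f : Cube n) : Finset (Cube n) :=
  (Finset.univ.filter (fun i => f i ≠ none)).image (fun i => Function.update f i none)

lemma mem_nbr {n : ℕ} {f g : Cube n} :
    g ∈ nbr f ↔ ∃ i, f i ≠ none ∧ Function.update f i none = g := by
  simp [nbr]

lemma uniq {n : ℕ} {f f' : Cube n} {i a j b : Fin n}
    (hne : f ≠ f')
    (hfi : f i ≠ none) (hfj : f' j ≠ none)
    (h1 : Function.update f i none = Function.update f' j none)
    (hfa : f a ≠ none) (hfb : f' b ≠ none)
    (h2 : Function.update f a none = Function.update f' b none) :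
    i = a := by
  have e1 : ∀ k, k ≠ i → k ≠ j → f k = f' k := by
    intro k hki hkj
    have := congrFun h1 k
    simpa [Function.update_apply, hki, hkj] using this
  have e1' : ∀ k, k ≠ a → k ≠ b → f k = f' k := by
    intro k hki hkj
    have := congrFun h2 k
    simpa [Function.update_apply, hki, hkj] using this
  have e2 : i ≠ j → f' i = none := by
    intro h
    have := congrFun h1 i
    simpa [Function.update_apply, h] using this.symm
  have e3 : i ≠ j → f j = none := by
    intro h
    have := congrFun h1 j
    simpa [Function.update_apply, Ne.symm h] using this.symm.symm
  have e2' : a ≠ b → f' a = none := by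
    intro h
    have := congrFun h2 a
    simpa [Function.update_apply, h] using this.symm
  by_cases hij : i = j <;> by_cases hab : a = b
  · obtain ⟨k, hk⟩ := Function.ne_iff.mp hne
    have hki : k = i := by
      by_contra h
      exact hk (e1 k h (hij ▸ h))
    have hka : k = a := by
      by_contra h
      exact hk (e1' k h (hab ▸ h))
    rw [← hki, hka]
  · have hfa' : f' a = none := e2' hab
    by_contra h
    exact hfa ((e1 a (fun hh => h hh.symm) (hij ▸ fun hh => h hh.symm)).trans hfa')
  · have hfi' : f' i = none := e2 hij
    by_contra h
    exact hfi ((e1' i h (hab ▸ h)).trans hfi')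
  · have hfi' : f' i = none := e2 hij
    have hfj' : f j = none := e3 hij
    have haj : a ≠ j := fun h => hfa (h ▸ hfj')
    by_contra h
    exact hfa ((e1 a (fun hh => h hh.symm) haj).trans (e2' hab))

lemma card_nbr {n q : ℕ} {f : Cube n}
    (hf : (Finset.univ.filter (fun i => f i = none)).card = q) :
    (nbr f).card = n - q := by
  have hinj : Set.InjOn (fun i => Function.update f i none)
      (Finset.univ.filter (fun i => f i ≠ none)) := by
    intro i hi j hj h
    by_contra hij
    have := congrFun h i
    simp [Function.update_apply, hij] at this
    exact (mem_filter.mp hi).2 this.symm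
  rw [nbr, card_image_of_injOn hinj]
  have := card_filter_add_card_filter_not (s := (univ : Finset (Fin n)))
    (p := fun i => f i = none)
  simp only [card_univ, Fintype.card_fin] at this
  have h2 : (univ.filter (fun i => ¬ f i = none)).card
      = (univ.filter (fun i => f i ≠ none)).card := rfl
  omega


/-- **Upper-shadow expansion for small sets of `(p-1)`-faces, `p = n/2`.**
For even `n`, `p = n/2`, a set `A` of `(p-1)`-faces of the `n`-cube with `|A| ≤ n/32`
satisfies `|∂⁺A| ≥ |A| · (n/2 + 1) · (15/16)`. -/
theorem upperShadow_expansion (n : ℕ) (hn : Even n) (p : ℕ) (hp : p = n / 2)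
    (A : Finset (Cube n)) (hA : ∀ f ∈ A, IsFace n (p - 1) f)
    (hcard : A.card ≤ n / 32) :
    16 * (upperShadow A).card ≥ 15 * (A.card * (n / 2 + 1)) := by
  classical
  rcases Nat.eq_zero_or_pos n with h0 | hn1
  · subst h0
    simp only [Nat.zero_div, Nat.le_zero] at hcard
    simp [hcard]
  have hmod : n % 2 = 0 := Nat.even_iff.mp hn
  set S : Finset (Cube n) := upperShadow A with hS
  have hSb : S = A.biUnion nbr := rfl
  set F : Cube n → Finset (Cube n) := fun g => A.filter (fun f => g ∈ nbr f) with hF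
  -- each nbr f has card n/2 + 1
  have hnbr : ∀ f ∈ A, (nbr f).card = n / 2 + 1 := by
    intro f hf
    have := card_nbr (hA f hf)
    omega
  -- double counting
  have hE : ∑ f ∈ A, (nbr f).card = ∑ g ∈ S, (F g).card := by
    calc ∑ f ∈ A, (nbr f).card
        = ∑ f ∈ A, (S.filter (fun g => g ∈ nbr f)).card := by
          refine sum_congr rfl fun f hf => ?_
          rw [filter_mem_eq_inter, inter_eq_right.mpr]
          rw [hSb]
          exact subset_biUnion_of_mem nbr hf
      _ = ∑ f ∈ A, ∑ g ∈ S, if g ∈ nbr f then 1 else 0 := by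
          refine sum_congr rfl fun f _ => ?_
          rw [card_eq_sum_ones, sum_filter]
      _ = ∑ g ∈ S, ∑ f ∈ A, if g ∈ nbr f then 1 else 0 := Finset.sum_comm
      _ = ∑ g ∈ S, (F g).card := by
          refine sum_congr rfl fun g _ => ?_
          rw [hF, card_eq_sum_ones, sum_filter]
  -- pair counting
  have hpair : ∑ g ∈ S, ((F g).offDiag).card ≤ A.card * A.card := by
    rw [← card_sigma]
    have h1 : (S.sigma (fun g => (F g).offDiag)).card ≤ (A ×ˢ A).card := by
      apply card_le_card_of_injOn (fun x => x.2)
      · intro x hx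
        rw [mem_coe, mem_sigma] at hx
        obtain ⟨hx1, hx2⟩ := hx
        rw [mem_offDiag] at hx2
        exact mem_product.mpr ⟨(mem_filter.mp hx2.1).1, (mem_filter.mp hx2.2.1).1⟩
      · intro x hx y hy hxy
        rw [mem_coe, mem_sigma] at hx hy
        obtain ⟨hx1, hx2⟩ := hx
        obtain ⟨hy1, hy2⟩ := hy
        rw [mem_offDiag] at hx2 hy2
        obtain ⟨hxf, hxf', hxne⟩ := hx2
        obtain ⟨hyf, hyf', hyne⟩ := hy2
        have h21 : x.2.1 = y.2.1 := congrArg Prod.fst hxy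
        have h22 : x.2.2 = y.2.2 := congrArg Prod.snd hxy
        rw [← h21] at hyf
        rw [← h22] at hyf'
        obtain ⟨i, hi1, hi2⟩ := mem_nbr.mp (mem_filter.mp hxf).2
        obtain ⟨j, hj1, hj2⟩ := mem_nbr.mp (mem_filter.mp hxf').2
        obtain ⟨a, ha1, ha2⟩ := mem_nbr.mp (mem_filter.mp hyf).2
        obtain ⟨b, hb1, hb2⟩ := mem_nbr.mp (mem_filter.mp hyf').2
        have hia : i = a :=
          uniq hxne hi1 hj1 (hi2.trans hj2.symm) ha1 hb1 (ha2.trans hb2.symm)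
        have hgg : x.1 = y.1 := by rw [← hi2, ← ha2, hia]
        exact Sigma.ext hgg (heq_of_eq hxy)
    simpa [card_product] using h1
  -- pointwise: d ≤ 1 + offDiag.card
  have hpt : ∀ g ∈ S, (F g).card ≤ 1 + ((F g).offDiag).card := by
    intro g _
    rw [offDiag_card]
    rcases h : (F g).card with _ | k
    · simp
    · have h1 : (k+1)*(k+1) = (k+1)*k + (k+1) := by ring
      have h2 : k ≤ (k+1)*k := Nat.le_mul_of_pos_left k (Nat.succ_pos k)
      omega
  have hsum : ∑ g ∈ S, (F g).card ≤ S.card + A.card * A.card := by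
    calc ∑ g ∈ S, (F g).card ≤ ∑ g ∈ S, (1 + ((F g).offDiag).card) :=
          sum_le_sum hpt
      _ = S.card + ∑ g ∈ S, ((F g).offDiag).card := by
          rw [sum_add_distrib, sum_const, smul_eq_mul, mul_one]
      _ ≤ S.card + A.card * A.card := Nat.add_le_add_left hpair _
  have hEval : ∑ f ∈ A, (nbr f).card = A.card * (n / 2 + 1) := by
    rw [sum_congr rfl hnbr, sum_const, smul_eq_mul]
  have hkey : A.card * (n / 2 + 1) ≤ S.card + A.card * A.card := by
    rw [← hEval]; rw [hE]; exact hsum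
  -- arithmetic
  have h32 : 16 * (n / 32) ≤ n / 2 + 1 := by omega
  have haa : 16 * (A.card * A.card) ≤ A.card * (n / 2 + 1) := by
    calc 16 * (A.card * A.card) = A.card * (16 * A.card) := by ring
      _ ≤ A.card * (16 * (n / 32)) :=
          Nat.mul_le_mul_left _ (Nat.mul_le_mul_left _ hcard)
      _ ≤ A.card * (n / 2 + 1) := Nat.mul_le_mul_left _ h32
  have h16 : 16 * (A.card * (n / 2 + 1)) ≤ 16 * S.card + 16 * (A.card * A.card) := by
    calc 16 * (A.card * (n / 2 + 1)) ≤ 16 * (S.card + A.card * A.card) :=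
          Nat.mul_le_mul_left 16 hkey
      _ = 16 * S.card + 16 * (A.card * A.card) := Nat.left_distrib 16 _ _
  omega
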